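/- Let n ≥ 2, let r > 0 and z = √(1 + r²). Then there exist a positive real number Ω₊ and a negative real number Ω₋ such that for Ω = Ω₊ and for Ω = Ω₋ the curves q_i(t) = (r cos(Ωt + 2π(i−1)/n), r sin(Ωt + 2π(i−1)/n), z), i = 1,…,n, form a solution of the curved n-body equations on H²; i.e., the regular polygon of n equal masses at constant height z admits elliptic relative equilibrium solutions with both a positive and a negative angular velocity. -/

import Mathlib

open Real

noncomputable section

/-- Lorentz inner product on `ℝ^{2,1} = ℝ × ℝ × ℝ`: `a⊙b = a₁b₁ + a₂b₂ − a₃b₃`. -/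
def ldot3 (a b : ℝ × ℝ × ℝ) : ℝ := a.1 * b.1 + a.2.1 * b.2.1 - a.2.2 * b.2.2

/-- The curved `n`-body problem on the hyperbolic plane `H²`, realized as the upper sheet
`{x² + y² − z² = −1, z > 0}` of the hyperboloid in `ℝ³` with the Lorentz product
(curvature `−1`), equal masses `mᵢ = 1`:  the curves stay on the upper sheet and satisfy
`q̈ᵢ = Σ_{j≠i} (qⱼ + (qᵢ⊙qⱼ) qᵢ)/((qᵢ⊙qⱼ)² − 1)^{3/2} + (q̇ᵢ⊙q̇ᵢ) qᵢ`. -/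
def IsHyperbolicSolution (n : ℕ) (q : Fin n → ℝ → ℝ × ℝ × ℝ) : Prop :=
  (∀ i t, ldot3 (q i t) (q i t) = -1 ∧ 0 < (q i t).2.2) ∧
  ∀ i t, deriv (deriv (q i)) t =
    (∑ j ∈ Finset.univ.erase i,
      (1 / (ldot3 (q i t) (q j t) ^ 2 - 1) ^ ((3 : ℝ) / 2)) •
        (q j t + ldot3 (q i t) (q j t) • q i t))
    + ldot3 (deriv (q i) t) (deriv (q i) t) • q i t

/-- The regular `n`-gon configuration rotating with angular velocity `Ω` on the circle of
radius `r` at height `z = √(1 + r²)` on the hyperboloid (bodies indexed by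
`i = 0,…,n−1`, corresponding to `i = 1,…,n` in the paper). -/
def polygonH (n : ℕ) (r Ω : ℝ) (i : Fin n) (t : ℝ) : ℝ × ℝ × ℝ :=
  (r * Real.cos (Ω * t + 2 * π * ((i : ℕ) : ℝ) / n),
   r * Real.sin (Ω * t + 2 * π * ((i : ℕ) : ℝ) / n),
   Real.sqrt (1 + r ^ 2))

/- ### Arithmetic helpers -/

lemma cos_congr' {n : ℕ} (hn : (n:ℝ) ≠ 0) {a b : ℤ} (h : a ≡ b [ZMOD n]) :
    Real.cos (2*π*a/n) = Real.cos (2*π*b/n) := by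
  obtain ⟨m, hm⟩ := h.dvd
  have hb : (b:ℝ) = a + n * m := by
    have : (b:ℤ) = a + n*m := by linarith
    exact_mod_cast congrArg (Int.cast : ℤ → ℝ) this
  rw [hb]
  have : 2*π*((a:ℝ) + n*m)/n = 2*π*a/n + m*(2*π) := by field_simp
  rw [this, Real.cos_add_int_mul_two_pi]

lemma sin_congr' {n : ℕ} (hn : (n:ℝ) ≠ 0) {a b : ℤ} (h : a ≡ b [ZMOD n]) :
    Real.sin (2*π*a/n) = Real.sin (2*π*b/n) := by
  obtain ⟨m, hm⟩ := h.dvd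
  have hb : (b:ℝ) = a + n * m := by
    have : (b:ℤ) = a + n*m := by linarith
    exact_mod_cast congrArg (Int.cast : ℤ → ℝ) this
  rw [hb]
  have : 2*π*((a:ℝ) + n*m)/n = 2*π*a/n + m*(2*π) := by field_simp
  rw [this, Real.sin_add_int_mul_two_pi]

lemma fin_sub_modeq {n : ℕ} [NeZero n] (a b : Fin n) :
    (((a - b : Fin n) : ℕ) : ℤ) ≡ ((a:ℕ):ℤ) - ((b:ℕ):ℤ) [ZMOD n] := by
  have h : ((a - b : Fin n) : ℕ) = (n - (b:ℕ) + (a:ℕ)) % n := by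
    simp [Fin.sub_def]
  rw [h, Int.natCast_mod]
  have hx : ((n - (b:ℕ) + (a:ℕ) : ℕ):ℤ) = (n:ℤ) - ((b:ℕ):ℤ) + ((a:ℕ):ℤ) := by
    have hb := Nat.le_of_lt b.is_lt
    push_cast [hb]
    ring
  rw [hx]
  have h1 : ((n:ℤ) - ((b:ℕ):ℤ) + ((a:ℕ):ℤ)) % n ≡ (n:ℤ) - ((b:ℕ):ℤ) + ((a:ℕ):ℤ) [ZMOD n] :=
    Int.emod_emod_of_dvd _ dvd_rfl
  exact h1.trans (Int.modEq_iff_dvd.mpr ⟨-1, by ring⟩)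

section FinTrig

variable {n : ℕ} [NeZero n]

lemma ncast_ne_zero : (n:ℝ) ≠ 0 := Nat.cast_ne_zero.mpr (NeZero.ne n)

lemma cos_d (i j : Fin n) :
    Real.cos (2*π*(((i:ℕ):ℝ) - ((j:ℕ):ℝ))/n)
      = Real.cos (2*π*((((i - j : Fin n):ℕ)):ℝ)/n) := by
  have h := cos_congr' (ncast_ne_zero (n := n)) (fin_sub_modeq i j)
  push_cast at h
  exact h.symm

lemma sin_d (i j : Fin n) :
    Real.sin (2*π*(((i:ℕ):ℝ) - ((j:ℕ):ℝ))/n)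
      = Real.sin (2*π*((((i - j : Fin n):ℕ)):ℝ)/n) := by
  have h := sin_congr' (ncast_ne_zero (n := n)) (fin_sub_modeq i j)
  push_cast at h
  exact h.symm

lemma neg_fin_modeq (k : Fin n) :
    ((((-k : Fin n)):ℕ):ℤ) ≡ -((k:ℕ):ℤ) [ZMOD n] := by
  have h := fin_sub_modeq (0 : Fin n) k
  simpa using h

lemma cos_neg_fin (k : Fin n) :
    Real.cos (2*π*((((-k : Fin n)):ℕ):ℝ)/n) = Real.cos (2*π*((k:ℕ):ℝ)/n) := by
  have h := cos_congr' (ncast_ne_zero (n := n)) (neg_fin_modeq k)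
  push_cast at h
  rw [h, show 2*π*(-((k:ℕ):ℝ))/n = -(2*π*((k:ℕ):ℝ)/n) by ring, Real.cos_neg]

lemma sin_neg_fin (k : Fin n) :
    Real.sin (2*π*((((-k : Fin n)):ℕ):ℝ)/n) = -Real.sin (2*π*((k:ℕ):ℝ)/n) := by
  have h := sin_congr' (ncast_ne_zero (n := n)) (neg_fin_modeq k)
  push_cast at h
  rw [h, show 2*π*(-((k:ℕ):ℝ))/n = -(2*π*((k:ℕ):ℝ)/n) by ring, Real.sin_neg]

/-- Transport a sum over `j ≠ i` of a function of `cos, sin` of `2π(i-j)/n`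
to the standard sum over `k ≠ 0`. -/
lemma sum_erase_transport (G : ℝ → ℝ → ℝ) (i : Fin n) :
    ∑ j ∈ Finset.univ.erase i,
        G (Real.cos (2*π*(((i:ℕ):ℝ) - ((j:ℕ):ℝ))/n))
          (Real.sin (2*π*(((i:ℕ):ℝ) - ((j:ℕ):ℝ))/n))
      = ∑ k ∈ Finset.univ.erase (0 : Fin n),
          G (Real.cos (2*π*((k:ℕ):ℝ)/n)) (Real.sin (2*π*((k:ℕ):ℝ)/n)) := by
  refine Finset.sum_nbij' (fun j : Fin n => i - j) (fun k : Fin n => i - k) ?_ ?_ ?_ ?_ ?_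
  · intro a ha
    simp only [Finset.mem_erase, Finset.mem_univ, and_true] at ha ⊢
    intro h
    exact ha (sub_eq_zero.mp h).symm
  · intro a ha
    simp only [Finset.mem_erase, Finset.mem_univ, and_true] at ha ⊢
    intro h
    exact ha (sub_eq_self.mp h)
  · intro a _; exact sub_sub_cancel i a
  · intro a _; exact sub_sub_cancel i a
  · intro a _
    rw [cos_d i a, sin_d i a]

lemma sum_sin_zero (G : ℝ → ℝ) (i : Fin n) :
    ∑ j ∈ Finset.univ.erase i,
        G (Real.cos (2*π*(((i:ℕ):ℝ) - ((j:ℕ):ℝ))/n))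
          * Real.sin (2*π*(((i:ℕ):ℝ) - ((j:ℕ):ℝ))/n) = 0 := by
  rw [sum_erase_transport (fun c s => G c * s) i]
  have key : ∀ a : Fin n,
      G (Real.cos (2*π*((a:ℕ):ℝ)/n)) * Real.sin (2*π*((a:ℕ):ℝ)/n)
        + G (Real.cos (2*π*(((-a : Fin n):ℕ):ℝ)/n)) * Real.sin (2*π*(((-a : Fin n):ℕ):ℝ)/n)
        = 0 := by
    intro a
    rw [cos_neg_fin, sin_neg_fin]
    ring
  refine Finset.sum_involution (fun k _ => -k) (fun a ha => key a) ?_ ?_ ?_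
  · intro a ha hfa heq
    apply hfa
    have heq' : -a = a := heq
    have h2 := key a
    rw [heq'] at h2
    linarith
  · intro a ha
    simp only [Finset.mem_erase, Finset.mem_univ, and_true] at ha ⊢
    exact neg_ne_zero.mpr ha
  · intro a ha
    exact neg_neg a

end FinTrig

/- ### The key coefficient -/

/-- The attraction denominator. -/
def Fden (r c : ℝ) : ℝ := ((r^2*c - (1+r^2))^2 - 1)^((3:ℝ)/2)

/-- The key (negative) coefficient `T`; the rotating polygon solves the equations
iff `Ω² = -T`. -/
def Tsum (n : ℕ) [NeZero n] (r : ℝ) : ℝ :=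
  ∑ k ∈ Finset.univ.erase (0 : Fin n),
    (1/Fden r (Real.cos (2*π*((k:ℕ):ℝ)/n))) * (Real.cos (2*π*((k:ℕ):ℝ)/n) - 1)

lemma cos_frac_lt_one {n : ℕ} (hn : 0 < n) {k : ℕ} (hk0 : 0 < k) (hkn : k < n) :
    Real.cos (2*π*(k:ℝ)/n) < 1 := by
  rcases lt_or_eq_of_le (Real.cos_le_one (2*π*(k:ℝ)/n)) with h | h
  · exact h
  exfalso
  obtain ⟨m, hm⟩ := (Real.cos_eq_one_iff _).mp h
  have hn' : (n:ℝ) ≠ 0 := by positivity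
  have h2 : 2*π*((m:ℝ)*n) = 2*π*(k:ℝ) := by
    field_simp at hm
    rw [hm]
  have h3 : (m:ℝ)*n = k := by
    have h2pi : (2*π) ≠ 0 := by positivity
    exact mul_left_cancel₀ h2pi h2
  have h4 : (m*n : ℤ) = k := by exact_mod_cast h3
  have hn2 : (0:ℤ) < n := by exact_mod_cast hn
  have hk2 : (0:ℤ) < k := by exact_mod_cast hk0
  have hk3 : (k:ℤ) < n := by exact_mod_cast hkn
  rcases le_or_gt m 0 with hm0 | hm0
  · nlinarith
  · have : (1:ℤ) ≤ m := hm0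
    nlinarith

lemma Fden_pos {r c : ℝ} (hr : 0 < r) (hc1 : c < 1) : 0 < Fden r c := by
  have hr2 : 0 < r^2 := by positivity
  have ha : r^2*c - (1+r^2) < -1 := by nlinarith [mul_pos hr2 (show (0:ℝ) < 1 - c by linarith)]
  have h : 0 < (r^2*c - (1+r^2))^2 - 1 := by nlinarith
  exact Real.rpow_pos_of_pos h _

lemma Tsum_neg {n : ℕ} [NeZero n] (hn : 2 ≤ n) {r : ℝ} (hr : 0 < r) : Tsum n r < 0 := by
  have hn0 : 0 < n := by omega
  refine Finset.sum_neg ?_ ?_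
  · intro k hk
    simp only [Finset.mem_erase, Finset.mem_univ, and_true] at hk
    have hk0 : 0 < (k:ℕ) := by
      have : (k:ℕ) ≠ 0 := fun h => hk (Fin.ext (by simp [h]))
      exact Nat.pos_of_ne_zero this
    have hc1 : Real.cos (2*π*((k:ℕ):ℝ)/n) < 1 := cos_frac_lt_one hn0 hk0 k.is_lt
    have hF : 0 < Fden r (Real.cos (2*π*((k:ℕ):ℝ)/n)) := Fden_pos hr hc1
    exact mul_neg_of_pos_of_neg (by positivity) (by linarith)
  · exact ⟨⟨1, by omega⟩, by simp [Finset.mem_erase, Fin.ext_iff]⟩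

/- ### Derivatives of the polygon curves -/

lemma polygonH_hasDeriv (n : ℕ) (r Ω : ℝ) (i : Fin n) (t : ℝ) :
    HasDerivAt (polygonH n r Ω i)
      (-(r*Ω) * Real.sin (Ω * t + 2 * π * ((i:ℕ):ℝ) / n),
       (r*Ω) * Real.cos (Ω * t + 2 * π * ((i:ℕ):ℝ) / n), 0) t := by
  have hu : HasDerivAt (fun s : ℝ => Ω * s + 2 * π * ((i:ℕ):ℝ) / n) Ω t := by
    simpa using ((hasDerivAt_id t).const_mul Ω).add_const (2 * π * ((i:ℕ):ℝ) / n)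
  have h1 : HasDerivAt (fun s : ℝ => r * Real.cos (Ω * s + 2 * π * ((i:ℕ):ℝ) / n))
      (-(r*Ω) * Real.sin (Ω * t + 2 * π * ((i:ℕ):ℝ) / n)) t := by
    exact ((hu.cos).const_mul r).congr_deriv (by ring)
  have h2 : HasDerivAt (fun s : ℝ => r * Real.sin (Ω * s + 2 * π * ((i:ℕ):ℝ) / n))
      ((r*Ω) * Real.cos (Ω * t + 2 * π * ((i:ℕ):ℝ) / n)) t := by
    exact ((hu.sin).const_mul r).congr_deriv (by ring)
  have h3 : HasDerivAt (fun _ : ℝ => Real.sqrt (1 + r ^ 2)) (0:ℝ) t := hasDerivAt_const _ _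
  exact h1.prodMk (h2.prodMk h3)

lemma polygonH_deriv (n : ℕ) (r Ω : ℝ) (i : Fin n) :
    deriv (polygonH n r Ω i) = fun t =>
      (-(r*Ω) * Real.sin (Ω * t + 2 * π * ((i:ℕ):ℝ) / n),
       (r*Ω) * Real.cos (Ω * t + 2 * π * ((i:ℕ):ℝ) / n), 0) :=
  funext fun t => (polygonH_hasDeriv n r Ω i t).deriv

lemma polygonH_deriv2 (n : ℕ) (r Ω : ℝ) (i : Fin n) (t : ℝ) :
    deriv (deriv (polygonH n r Ω i)) t =
      (-(r*Ω^2) * Real.cos (Ω * t + 2 * π * ((i:ℕ):ℝ) / n),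
       -(r*Ω^2) * Real.sin (Ω * t + 2 * π * ((i:ℕ):ℝ) / n), 0) := by
  rw [polygonH_deriv]
  have hu : HasDerivAt (fun s : ℝ => Ω * s + 2 * π * ((i:ℕ):ℝ) / n) Ω t := by
    simpa using ((hasDerivAt_id t).const_mul Ω).add_const (2 * π * ((i:ℕ):ℝ) / n)
  have h1 : HasDerivAt (fun s : ℝ => -(r*Ω) * Real.sin (Ω * s + 2 * π * ((i:ℕ):ℝ) / n))
      (-(r*Ω^2) * Real.cos (Ω * t + 2 * π * ((i:ℕ):ℝ) / n)) t := by
    exact ((hu.sin).const_mul (-(r*Ω))).congr_deriv (by ring)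
  have h2 : HasDerivAt (fun s : ℝ => (r*Ω) * Real.cos (Ω * s + 2 * π * ((i:ℕ):ℝ) / n))
      (-(r*Ω^2) * Real.sin (Ω * t + 2 * π * ((i:ℕ):ℝ) / n)) t := by
    exact ((hu.cos).const_mul (r*Ω)).congr_deriv (by ring)
  have h3 : HasDerivAt (fun _ : ℝ => (0:ℝ)) (0:ℝ) t := hasDerivAt_const _ _
  exact (h1.prodMk (h2.prodMk h3)).deriv

/- ### The Lorentz products -/

lemma sq_z {r : ℝ} : Real.sqrt (1 + r^2) ^ 2 = 1 + r^2 :=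
  Real.sq_sqrt (by positivity)

lemma ldot_polygon {n : ℕ} (hn : (n:ℝ) ≠ 0) (r Ω : ℝ) (i j : Fin n) (t : ℝ) :
    ldot3 (polygonH n r Ω i t) (polygonH n r Ω j t)
      = r^2 * Real.cos (2*π*(((i:ℕ):ℝ) - ((j:ℕ):ℝ))/n) - (1+r^2) := by
  unfold ldot3 polygonH
  simp only
  have hz := sq_z (r := r)
  have harg : (Ω * t + 2 * π * ((i:ℕ):ℝ) / n) - (Ω * t + 2 * π * ((j:ℕ):ℝ) / n)
      = 2*π*(((i:ℕ):ℝ) - ((j:ℕ):ℝ))/n := by ring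
  have hcos := Real.cos_sub (Ω * t + 2 * π * ((i:ℕ):ℝ) / n) (Ω * t + 2 * π * ((j:ℕ):ℝ) / n)
  rw [harg] at hcos
  nlinarith [hcos, hz]

/- ### The main solution lemma -/

lemma polygon_solution (n : ℕ) [NeZero n] (hn : 2 ≤ n) (r : ℝ) (hr : 0 < r) (Ω : ℝ)
    (hΩ : Ω^2 = -(Tsum n r)) :
    IsHyperbolicSolution n (polygonH n r Ω) := by
  have hnR : (n:ℝ) ≠ 0 := ncast_ne_zero (n := n)
  constructor
  · intro i t
    constructor
    · unfold ldot3 polygonH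
      simp only
      have hz := sq_z (r := r)
      nlinarith [Real.sin_sq_add_cos_sq (Ω * t + 2 * π * ((i:ℕ):ℝ) / n)]
    · unfold polygonH
      simp only
      positivity
  · intro i t
    set θ : ℝ := Ω * t + 2 * π * ((i:ℕ):ℝ) / n with hθ
    -- the right-hand side vectors
    set z : ℝ := Real.sqrt (1 + r^2) with hzdef
    have hz : z^2 = 1 + r^2 := sq_z
    -- rewrite each summand
    have hsummand : ∀ j ∈ Finset.univ.erase i,
        (1 / (ldot3 (polygonH n r Ω i t) (polygonH n r Ω j t) ^ 2 - 1) ^ ((3 : ℝ) / 2)) •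
          (polygonH n r Ω j t + ldot3 (polygonH n r Ω i t) (polygonH n r Ω j t) •
            polygonH n r Ω i t)
        = (fun c s : ℝ =>
            (((1/Fden r c) * (r*(1+r^2)*(c-1))) * Real.cos θ
                + ((1/Fden r c) * (r*s)) * Real.sin θ,
             ((1/Fden r c) * (r*(1+r^2)*(c-1))) * Real.sin θ
                - ((1/Fden r c) * (r*s)) * Real.cos θ,
             ((1/Fden r c) * (r^2*(c-1))) * z))
            (Real.cos (2*π*(((i:ℕ):ℝ) - ((j:ℕ):ℝ))/n))
            (Real.sin (2*π*(((i:ℕ):ℝ) - ((j:ℕ):ℝ))/n)) := by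
      intro j hj
      rw [ldot_polygon hnR]
      set d : ℝ := 2*π*(((i:ℕ):ℝ) - ((j:ℕ):ℝ))/n with hd
      have hargj : Ω * t + 2 * π * ((j:ℕ):ℝ) / n = θ - d := by
        rw [hθ, hd]; ring
      unfold polygonH Fden
      simp only [Prod.smul_mk, Prod.mk_add_mk, smul_eq_mul]
      rw [hargj, Real.cos_sub, Real.sin_sub]
      refine Prod.ext ?_ (Prod.ext ?_ ?_)
      · simp only; ring
      · simp only; ring
      · simp only; ring
    rw [Finset.sum_congr rfl hsummand]
    -- split the sum componentwise
    have hT : ∑ j ∈ Finset.univ.erase i,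
        (1/Fden r (Real.cos (2*π*(((i:ℕ):ℝ) - ((j:ℕ):ℝ))/n)))
          * (Real.cos (2*π*(((i:ℕ):ℝ) - ((j:ℕ):ℝ))/n) - 1) = Tsum n r := by
      exact sum_erase_transport (fun c _ => (1/Fden r c) * (c - 1)) i
    have hS : ∑ j ∈ Finset.univ.erase i,
        (1/Fden r (Real.cos (2*π*(((i:ℕ):ℝ) - ((j:ℕ):ℝ))/n)))
          * Real.sin (2*π*(((i:ℕ):ℝ) - ((j:ℕ):ℝ))/n) = 0 :=
      sum_sin_zero (fun c => 1/Fden r c) i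
    -- derivative facts
    rw [polygonH_deriv2]
    have hld : ldot3 (deriv (polygonH n r Ω i) t) (deriv (polygonH n r Ω i) t) = r^2*Ω^2 := by
      rw [polygonH_deriv]
      unfold ldot3
      simp only
      nlinarith [Real.sin_sq_add_cos_sq θ]
    rw [hld]
    -- now everything is explicit; finish componentwise
    unfold polygonH
    refine Prod.ext ?_ (Prod.ext ?_ ?_)
    · simp only [Prod.fst_add, Prod.fst_sum, Prod.smul_fst, smul_eq_mul]
      rw [Finset.sum_add_distrib, ← Finset.sum_mul, ← Finset.sum_mul]
      have h1 : ∑ j ∈ Finset.univ.erase i,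
          (1/Fden r (Real.cos (2*π*(((i:ℕ):ℝ) - ((j:ℕ):ℝ))/n)))
            * (r*(1+r^2)*(Real.cos (2*π*(((i:ℕ):ℝ) - ((j:ℕ):ℝ))/n) - 1))
          = r*(1+r^2) * Tsum n r := by
        rw [← hT, Finset.mul_sum]
        exact Finset.sum_congr rfl fun j _ => by ring
      have h2 : ∑ j ∈ Finset.univ.erase i,
          (1/Fden r (Real.cos (2*π*(((i:ℕ):ℝ) - ((j:ℕ):ℝ))/n)))
            * (r * Real.sin (2*π*(((i:ℕ):ℝ) - ((j:ℕ):ℝ))/n)) = r * 0 := by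
        rw [← hS, Finset.mul_sum]
        exact Finset.sum_congr rfl fun j _ => by ring
      rw [h1, h2, ← hθ]
      linear_combination (-(r*(1+r^2)*Real.cos θ)) * hΩ
    · simp only [Prod.snd_add, Prod.snd_sum, Prod.smul_snd, Prod.fst_add, Prod.fst_sum,
        Prod.smul_fst, smul_eq_mul]
      rw [Finset.sum_sub_distrib, ← Finset.sum_mul, ← Finset.sum_mul]
      have h1 : ∑ j ∈ Finset.univ.erase i,
          (1/Fden r (Real.cos (2*π*(((i:ℕ):ℝ) - ((j:ℕ):ℝ))/n)))
            * (r*(1+r^2)*(Real.cos (2*π*(((i:ℕ):ℝ) - ((j:ℕ):ℝ))/n) - 1))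
          = r*(1+r^2) * Tsum n r := by
        rw [← hT, Finset.mul_sum]
        exact Finset.sum_congr rfl fun j _ => by ring
      have h2 : ∑ j ∈ Finset.univ.erase i,
          (1/Fden r (Real.cos (2*π*(((i:ℕ):ℝ) - ((j:ℕ):ℝ))/n)))
            * (r * Real.sin (2*π*(((i:ℕ):ℝ) - ((j:ℕ):ℝ))/n)) = r * 0 := by
        rw [← hS, Finset.mul_sum]
        exact Finset.sum_congr rfl fun j _ => by ring
      rw [h1, h2, ← hθ]
      linear_combination (-(r*(1+r^2)*Real.sin θ)) * hΩ
    · simp only [Prod.snd_add, Prod.snd_sum, Prod.smul_snd, smul_eq_mul]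
      rw [← Finset.sum_mul]
      have h3 : ∑ j ∈ Finset.univ.erase i,
          (1/Fden r (Real.cos (2*π*(((i:ℕ):ℝ) - ((j:ℕ):ℝ))/n)))
            * (r^2*(Real.cos (2*π*(((i:ℕ):ℝ) - ((j:ℕ):ℝ))/n) - 1))
          = r^2 * Tsum n r := by
        rw [← hT, Finset.mul_sum]
        exact Finset.sum_congr rfl fun j _ => by ring
      rw [h3]
      linear_combination (-(r^2*z)) * hΩ


/-- For `n` equal masses on `H²` in a regular polygon configuration at height
`z = √(1 + r²)` (with `r > 0`), there exist a positive and a negative angular velocity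
making the rotating polygon an elliptic relative equilibrium solution. -/
theorem polygon_relative_equilibrium_exists_hyperbolic
    (n : ℕ) (hn : 2 ≤ n) (r : ℝ) (hr0 : 0 < r) :
    ∃ Ωp Ωm : ℝ, 0 < Ωp ∧ Ωm < 0 ∧
      IsHyperbolicSolution n (polygonH n r Ωp) ∧ IsHyperbolicSolution n (polygonH n r Ωm) := by
  haveI : NeZero n := ⟨by omega⟩
  have hT := Tsum_neg hn hr0
  refine ⟨Real.sqrt (-(Tsum n r)), -Real.sqrt (-(Tsum n r)), ?_, ?_, ?_, ?_⟩
  · exact Real.sqrt_pos.mpr (by linarith)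
  · simp only [neg_neg, Left.neg_neg_iff]
    exact Real.sqrt_pos.mpr (by linarith)
  · exact polygon_solution n hn r hr0 _ (Real.sq_sqrt (by linarith))
  · exact polygon_solution n hn r hr0 _ (by
      rw [neg_pow, Real.sq_sqrt (by linarith)]; ring)
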